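/- Let d ≤ n with n ≥ 2 and let {E_i}_{i=1}^n be an equiangular POVM on ℂ^d, i.e., E_i = (d/n)Π_i where each Π_i is a rank-one orthogonal projection, tr(Π_i Π_j) = (n−d)/(d(n−1)) for all i ≠ j, and Σ_i E_i = I. Then its disturbance satisfies D = Σ_{l,m} (tr(√E_l √E_m))² − 2 Σ_l (tr √E_l)² + d² = n(d−1)²/(n−1). -/

import Mathlib

open Matrix BigOperators
open scoped ComplexOrder

/-- The positive semidefinite square root of a positive semidefinite matrix
(as defined in Mathlib of December 2024, since removed). -/
noncomputable def Matrix.PosSemidef.sqrt {𝕜 : Type*} [RCLike 𝕜] {m : Type*} [Fintype m]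
    [DecidableEq m] {A : Matrix m m 𝕜} (hA : A.PosSemidef) : Matrix m m 𝕜 :=
  (hA.1.eigenvectorUnitary : Matrix m m 𝕜) *
    diagonal (fun i => ((Real.sqrt (hA.1.eigenvalues i) : ℝ) : 𝕜)) *
    (star hA.1.eigenvectorUnitary : Matrix m m 𝕜)

open scoped MatrixOrder in
theorem PosSemidef_eq_sqrt_of_sq_eq_aux {d : ℕ} {A B : Matrix (Fin d) (Fin d) ℂ}
    (hB : B.PosSemidef) (hA : A.PosSemidef) (h : B ^ 2 = A) : B = hA.sqrt := by
  have e : hA.sqrt = CFC.sqrt A := by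
    rw [CFC.sqrt_eq_real_sqrt A hA.nonneg, cfcₙ_eq_cfc, IsHermitian.cfc_eq hA.1 Real.sqrt]
    simp [IsHermitian.cfc, Matrix.PosSemidef.sqrt, Unitary.conjStarAlgAut_apply, Function.comp_def]
  rw [e]
  exact (CFC.sqrt_unique (by rw [← sq]; exact h) hB.nonneg).symm

/-- For an equiangular POVM `{E_i = (d/n)Π_i}` on `ℂ^d` (with `d ≤ n`, `n ≥ 2`,
each `Π_i` a rank-one orthogonal projection, `tr(Π_i Π_j) = (n−d)/(d(n−1))` for `i ≠ j`,
and `Σ_i E_i = I`), the disturbance satisfies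
`D = Σ_{l,m} (tr(√E_l √E_m))² − 2 Σ_l (tr √E_l)² + d² = n(d−1)²/(n−1)`. -/
theorem ea_povm_disturbance
    (d n : ℕ) (hdn : d ≤ n) (hn : 2 ≤ n)
    (P : Fin n → Matrix (Fin d) (Fin d) ℂ)
    (hproj : ∀ i, (P i).IsHermitian ∧ P i * P i = P i ∧ (P i).trace = 1)
    (hangle : ∀ i j, i ≠ j →
      (P i * P j).trace = ((((n : ℝ) - d) / ((d : ℝ) * ((n : ℝ) - 1)) : ℝ) : ℂ))
    (E : Fin n → Matrix (Fin d) (Fin d) ℂ)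
    (hEdef : ∀ i, E i = ((d : ℂ) / (n : ℂ)) • P i)
    (hE : ∀ i, (E i).PosSemidef)
    (hsum : ∑ i, E i = 1) :
    ∑ l, ∑ m, (((hE l).sqrt * (hE m).sqrt).trace.re) ^ 2
        - 2 * ∑ l, (((hE l).sqrt).trace.re) ^ 2 + (d : ℝ) ^ 2
      = (n : ℝ) * ((d : ℝ) - 1) ^ 2 / ((n : ℝ) - 1) := by
  have hd1 : 1 ≤ d := by
    by_contra h
    have hd0 : d = 0 := by omega
    have := (hproj ⟨0, by omega⟩).2.2
    subst hd0
    simp [Matrix.trace] at this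
  -- the positive square root of d/n
  set c : ℝ := Real.sqrt ((d : ℝ) / n) with hc
  have hn0 : (0:ℝ) < n := by positivity
  have hcsq : (c : ℝ) ^ 2 = (d : ℝ) / n := Real.sq_sqrt (by positivity)
  have hcnn : (0:ℝ) ≤ c := Real.sqrt_nonneg _
  have hcC : ((c : ℂ)) ^ 2 = (d : ℂ) / (n : ℂ) := by
    have := congrArg (Complex.ofReal) hcsq
    push_cast at this
    exact_mod_cast this
  -- sqrt of E i
  have hsqrt : ∀ i, (hE i).sqrt = (c : ℂ) • P i := by
    intro i
    refine ((PosSemidef_eq_sqrt_of_sq_eq_aux ?_ (hE i) ?_)).symm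
    · have h1 : ((((Real.sqrt c : ℝ) : ℂ)) • P i)ᴴ * ((((Real.sqrt c : ℝ) : ℂ)) • P i)
          = (c : ℂ) • P i := by
        rw [conjTranspose_smul, (hproj i).1.eq]
        rw [Matrix.smul_mul, Matrix.mul_smul, smul_smul, (hproj i).2.1]
        congr 1
        rw [Complex.star_def, Complex.conj_ofReal, ← Complex.ofReal_mul,
          Real.mul_self_sqrt hcnn]
      rw [← h1]
      exact Matrix.posSemidef_conjTranspose_mul_self _
    · rw [hEdef i, sq, Matrix.smul_mul, Matrix.mul_smul, smul_smul, (hproj i).2.1]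
      congr 1
      rw [← sq, hcC]
  -- trace values
  have htr1 : ∀ l, (((hE l).sqrt).trace.re) = c := by
    intro l
    rw [hsqrt l, trace_smul, (hproj l).2.2]
    simp
  have htrdiag : ∀ l, (((hE l).sqrt * (hE l).sqrt).trace.re) = (d : ℝ) / n := by
    intro l
    rw [hsqrt l, Matrix.smul_mul, Matrix.mul_smul, smul_smul, (hproj l).2.1, trace_smul,
      (hproj l).2.2]
    rw [smul_eq_mul, mul_one, ← Complex.ofReal_mul, Complex.ofReal_re, ← sq, hcsq]
  have htroff : ∀ l m, l ≠ m → (((hE l).sqrt * (hE m).sqrt).trace.re)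
      = ((n : ℝ) - d) / ((n : ℝ) * ((n : ℝ) - 1)) := by
    intro l m hlm
    rw [hsqrt l, hsqrt m, Matrix.smul_mul, Matrix.mul_smul, smul_smul, trace_smul,
      hangle l m hlm]
    rw [smul_eq_mul, ← Complex.ofReal_mul, ← Complex.ofReal_mul, Complex.ofReal_re]
    have hd0 : (0:ℝ) < d := by exact_mod_cast hd1
    have hn1 : (1:ℝ) < n := by exact_mod_cast (by omega : 1 < n)
    have hcc : c * c = (d : ℝ) / n := by rw [← sq, hcsq]
    rw [hcc, div_mul_div_comm, div_eq_div_iff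
      (mul_ne_zero (by positivity) (mul_ne_zero (ne_of_gt hd0) (by linarith)))
      (mul_ne_zero (by positivity) (by linarith))]
    ring
  -- abbreviations
  set a : ℝ := (d : ℝ) / n with ha
  set b : ℝ := ((n : ℝ) - d) / ((n : ℝ) * ((n : ℝ) - 1)) with hb
  have hsum2 : ∑ l, (((hE l).sqrt).trace.re) ^ 2 = n * c ^ 2 := by
    simp only [htr1]
    rw [Finset.sum_const, Finset.card_univ, Fintype.card_fin, nsmul_eq_mul]
  have hsum1 : ∑ l, ∑ m, (((hE l).sqrt * (hE m).sqrt).trace.re) ^ 2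
      = n * a ^ 2 + (n * (n - 1)) * b ^ 2 := by
    have key : ∀ l m : Fin n, (((hE l).sqrt * (hE m).sqrt).trace.re) ^ 2
        = b ^ 2 + (if m = l then a ^ 2 - b ^ 2 else 0) := by
      intro l m
      by_cases h : m = l
      · subst h; rw [htrdiag]; simp [ha]
      · rw [htroff l m (fun hh => h hh.symm)]; simp [h, hb]
    simp only [key, Finset.sum_add_distrib, Finset.sum_ite_eq', Finset.mem_univ, if_true,
      Finset.sum_const, Finset.card_univ, Fintype.card_fin, nsmul_eq_mul, smul_eq_mul]
    ring
  rw [hsum1, hsum2, hcsq]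
  have hd0 : (0:ℝ) < d := by exact_mod_cast hd1
  have hn1 : (1:ℝ) < n := by exact_mod_cast (by omega : 1 < n)
  have hnne : (n:ℝ) ≠ 0 := ne_of_gt hn0
  have hn1ne : (n:ℝ) - 1 ≠ 0 := by linarith
  rw [ha, hb]
  field_simp
  ring
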